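/- Let G = H∗_(K,φ) where K is a normal subgroup of H. Suppose V is a subgroup with K ⊴ V ≤ N_H(K) = H and V ∩ Z(H) ∩ Fix(φ) = 1. Then the homomorphism χ̄₂ restricted to V induces an injective homomorphism V/K → Out_H^{(V)}(G). -/

import Mathlib

open HNNExtension

/-- The automorphism-induced HNN extension `H∗_(K,φ)`. -/
abbrev AutHNN (H : Type*) [Group H] (K : Subgroup H) (φ : H ≃* H) :=
  HNNExtension H K (K.map (φ : H →* H)) (φ.subgroupMap K)

/-- The inner automorphisms form a normal subgroup of `Aut(G)`. -/
instance innNormal (G : Type*) [Group G] :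
    ((MulAut.conj : G →* MulAut G).range).Normal := by
  constructor
  rintro f ⟨g, rfl⟩ ψ
  refine ⟨ψ g, ?_⟩
  ext x
  simp [MulAut.conj, mul_assoc]

/-- The outer automorphism group `Out(G) = Aut(G)/Inn(G)`. -/
abbrev OutGroup (G : Type*) [Group G] :=
  MulAut G ⧸ (MulAut.conj : G →* MulAut G).range

open HNNExtension.NormalWord in
/-- An element of an HNN extension commuting with every element of the base group
is either in the base group, or one of the associated subgroups is everything. -/
lemma centralizing_structure {G : Type*} [Group G] (A B : Subgroup G) (φ : A ≃* B)
    (w : HNNExtension G A B φ) (hw : ∀ h : G, w * of h = of h * w) :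
    (∃ c : G, w = of c) ∨ A = ⊤ ∨ B = ⊤ := by
  obtain ⟨d⟩ := NormalWord.TransversalPair.nonempty G A B
  set W : NormalWord d := w • NormalWord.empty with hW
  have hprod : W.prod φ = w := by
    rw [hW, NormalWord.prod_smul, NormalWord.prod_empty, mul_one]
  rcases W.toList.eq_nil_or_concat with hnil | ⟨l₀, a, hconcat'⟩
  · left
    refine ⟨W.head, ?_⟩
    rw [← hprod]
    simp [ReducedWord.prod, hnil]
  · have hconcat : W.toList = l₀ ++ [a] := by rw [hconcat', List.concat_eq_append]
    have hne : W.toList ≠ [] := by rw [hconcat]; simp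
    set u₁ : ℤˣ := (W.toList.head hne).1 with hu₁
    have hhead : W.toList.head?.map Prod.fst = some u₁ := by
      rw [List.head?_eq_head hne]; rfl
    -- the two reduced words for `of h * w = w * of h`
    have key : ∀ h : G, W.head⁻¹ * (h⁻¹ * W.head) ∈ toSubgroup A B (-u₁) := by
      intro h
      have chain2 : (l₀ ++ [(a.1, a.2 * h)]).Chain'
          (fun x y => x.2 ∈ toSubgroup A B x.1 → x.1 = y.1) := by
        have := W.chain
        rw [hconcat] at this
        rw [List.isChain_append] at this; show List.IsChain _ _; rw [List.isChain_append]
        refine ⟨this.1, List.isChain_singleton _, ?_⟩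
        intro x hx y hy
        simp only [List.head?_cons, Option.mem_def, Option.some.injEq] at hy
        subst hy
        exact this.2.2 x hx a (by simp)
      set W₁ : ReducedWord G A B := ⟨h * W.head, W.toList, W.chain⟩ with hW₁
      set W₂ : ReducedWord G A B := ⟨W.head, l₀ ++ [(a.1, a.2 * h)], chain2⟩ with hW₂
      have hp1 : W₁.prod φ = of h * w := by
        rw [← hprod]
        simp [hW₁, ReducedWord.prod, mul_assoc]
      have hp2 : W₂.prod φ = w * of h := by
        rw [← hprod]
        simp only [hW₂, ReducedWord.prod, hconcat, List.map_append,
          List.prod_append, List.map_cons, List.map_nil, List.prod_cons, List.prod_nil,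
          map_mul, mul_one, mul_assoc]
      have hE : W₁.prod φ = W₂.prod φ := by rw [hp1, hp2, hw]
      have := (ReducedWord.map_fst_eq_and_of_prod_eq φ hE).2 u₁ (by
        show u₁ ∈ (W₁.toList.head?.map Prod.fst)
        rw [hW₁]
        simp only [hhead]; rfl)
      have h2 : (h * W.head)⁻¹ * W.head ∈ toSubgroup A B (-u₁) := this
      rwa [mul_inv_rev, mul_assoc] at h2
    have htop : toSubgroup A B (-u₁) = ⊤ := by
      rw [Subgroup.eq_top_iff']
      intro x
      have := key (W.head * x⁻¹ * W.head⁻¹)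
      simpa [mul_assoc] using this
    rcases Int.units_eq_one_or u₁ with h1 | h1
    · right; right
      rw [h1] at htop
      simpa using htop
    · right; left
      rw [h1, neg_neg] at htop
      simpa using htop

/-- The mapping torus homomorphism `H∗_(K,φ) →* H ⋊ ℤ`. -/
noncomputable def torus {H : Type*} [Group H] (K : Subgroup H) (φ : H ≃* H) :
    AutHNN H K φ →* SemidirectProduct H (Multiplicative ℤ)
      (zpowersHom (MulAut H) (φ : MulAut H)) :=
  HNNExtension.lift SemidirectProduct.inl
    (SemidirectProduct.inr (Multiplicative.ofAdd 1)) (by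
      intro a
      ext
      · simp [MulEquiv.coe_subgroupMap_apply]
      · simp)

@[simp] lemma torus_of {H : Type*} [Group H] (K : Subgroup H) (φ : H ≃* H) (h : H) :
    torus K φ (of h) = SemidirectProduct.inl h := by
  simp [torus]

@[simp] lemma torus_t {H : Type*} [Group H] (K : Subgroup H) (φ : H ≃* H) :
    torus K φ t = SemidirectProduct.inr (Multiplicative.ofAdd 1) := by
  simp [torus]

/-- If `K ⊴ V ≤ N_H(K)` with `V ∩ Z(H) ∩ Fix(φ) = 1`, then the map
`χ̄₂ : N_H(K) → Out_H^(V)(G)`, `b ↦ [α_(γ_b, b⁻¹φ(b))]`, restricted to `V`,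
induces an injective homomorphism `V/K → Out_H^(V)(G)`. -/
theorem induced_map_injective {H : Type*} [Group H] (K : Subgroup H) (φ : H ≃* H)
    (V : Subgroup H) (hKV : K ≤ V) (hVN : V ≤ Subgroup.normalizer (K : Set H))
    (hVJ : ∀ v ∈ V, v ∈ Subgroup.center H → φ v = v → v = 1)
    (τ : Subgroup.normalizer (K : Set H) →* OutGroup (AutHNN H K φ))
    (hτ : ∀ b : Subgroup.normalizer (K : Set H), ∃ ψ : MulAut (AutHNN H K φ),
      (∀ h : H, ψ (of h) = of ((b : H)⁻¹ * h * b)) ∧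
      ψ t = of ((b : H)⁻¹ * φ (b : H)) * t ∧
      τ b = QuotientGroup.mk ψ) :
    ∀ v (hv : v ∈ V), τ ⟨v, hVN hv⟩ = 1 → v ∈ K := by
  intro v hv hτ1
  obtain ⟨ψ, h1, h2, h3⟩ := hτ ⟨v, hVN hv⟩
  rw [h3] at hτ1
  obtain ⟨g, hg⟩ := (QuotientGroup.eq_one_iff ψ).1 hτ1
  have hψ : ∀ x, ψ x = g * x * g⁻¹ := fun x => by rw [← hg]; rfl
  set w : AutHNN H K φ := of v * g with hwdef
  have hw1 : ∀ h : H, w * of h = of h * w := by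
    intro h
    have hh := h1 h
    rw [hψ] at hh
    have e1 : w * of h = of v * (g * of h * g⁻¹) * g := by
      rw [hwdef]; group
    rw [e1, hh]
    have e2 : (v : H) * (v⁻¹ * h * v) = h * v := by group
    rw [← map_mul, e2, map_mul, hwdef, mul_assoc]
  have hw2 : w * t = of (φ v) * t * (of v)⁻¹ * w := by
    have ht := h2
    rw [hψ] at ht
    have e1 : w * t = of v * (g * t * g⁻¹) * g := by rw [hwdef]; group
    rw [e1, ht]
    have e2 : (v : H) * (v⁻¹ * φ v) = φ v := by group
    rw [← mul_assoc, ← map_mul, e2, hwdef]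
    group
  rcases centralizing_structure K (K.map (φ : H →* H)) (φ.subgroupMap K) w hw1 with
    ⟨c, hc⟩ | hA | hB
  · -- main case : w = of c
    rw [hc] at hw1 hw2
    -- c is central
    have hcc : c ∈ Subgroup.center H := by
      rw [Subgroup.mem_center_iff]
      intro h
      have := hw1 h
      rw [← map_mul, ← map_mul] at this
      exact (HNNExtension.of_injective (φ.subgroupMap K) this).symm
    -- the key equation
    have E : (of c : AutHNN H K φ) * t = of (φ v) * t * (of v)⁻¹ * of c := hw2
    -- φ c = c, via the mapping torus
    have φc : φ c = c := by
      have := congrArg (fun x => (torus K φ x).left) E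
      simp only [map_mul, map_inv, torus_of, torus_t, SemidirectProduct.mul_left,
        SemidirectProduct.left_inl, SemidirectProduct.right_inl, SemidirectProduct.left_inr,
        SemidirectProduct.right_inr, SemidirectProduct.inv_left, SemidirectProduct.inv_right,
        SemidirectProduct.mul_right, zpowersHom_apply, map_one, mul_one, one_mul] at this
      simp only [toAdd_ofAdd, zpow_one, inv_one, MulAut.one_apply] at this
      rw [show φ v * ((φ : MulAut H) v)⁻¹ * ((φ : MulAut H) * 1) c = φ c by
        simp] at this
      exact this.symm
    -- Britton's lemma applied to `of ((φ v)⁻¹ * c) * (t * of (c⁻¹ * v)) = t`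
    have E2 : (of ((φ v)⁻¹ * c) : AutHNN H K φ) * (t * of (c⁻¹ * v)) = t := by
      calc (of ((φ v)⁻¹ * c) : AutHNN H K φ) * (t * of (c⁻¹ * v))
          = (of (φ v))⁻¹ * (of c * t) * of (c⁻¹ * v) := by
            simp [map_mul, map_inv, mul_assoc]
        _ = (of (φ v))⁻¹ * (of (φ v) * t * (of v)⁻¹ * of c) * of (c⁻¹ * v) := by rw [E]
        _ = t := by simp [map_mul, map_inv, mul_assoc]
    set W₁ : HNNExtension.NormalWord.ReducedWord H K (K.map (φ : H →* H)) :=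
      ⟨(φ v)⁻¹ * c, [(1, c⁻¹ * v)], List.isChain_singleton _⟩ with hW₁
    set W₂ : HNNExtension.NormalWord.ReducedWord H K (K.map (φ : H →* H)) :=
      ⟨1, [(1, 1)], List.isChain_singleton _⟩ with hW₂
    have hp1 : W₁.prod (φ.subgroupMap K) = of ((φ v)⁻¹ * c) * (t * of (c⁻¹ * v)) := by
      simp [hW₁, HNNExtension.NormalWord.ReducedWord.prod]
    have hp2 : W₂.prod (φ.subgroupMap K) = t := by
      simp [hW₂, HNNExtension.NormalWord.ReducedWord.prod]
    have hE2 : W₁.prod (φ.subgroupMap K) = W₂.prod (φ.subgroupMap K) := by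
      rw [hp1, hp2, E2]
    have hbrit := (HNNExtension.ReducedWord.map_fst_eq_and_of_prod_eq
      (φ.subgroupMap K) hE2).2 1 (by rw [hW₁]; rfl)
    have hmemB : c⁻¹ * φ v ∈ K.map (φ : H →* H) := by
      have h4 : ((φ v)⁻¹ * c)⁻¹ * (1:H) ∈ toSubgroup K (K.map (φ : H →* H)) (-1) := hbrit
      simpa [mul_inv_rev] using h4
    obtain ⟨k, hkK, hkeq⟩ := hmemB
    have hkeq' : φ k = c⁻¹ * φ v := hkeq
    have hvck : φ (c * k) = φ v := by
      rw [map_mul, φc, hkeq']; group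
    have hv2 : c * k = v := φ.injective hvck
    have hcV : c ∈ V := by
      have hcvk : c = v * k⁻¹ := by rw [← hv2]; group
      rw [hcvk]; exact mul_mem hv (inv_mem (hKV hkK))
    have hc1 : c = 1 := hVJ c hcV hcc φc
    rw [← hv2, hc1, one_mul]
    exact hkK
  · exact hA ▸ Subgroup.mem_top v
  · have : φ v ∈ K.map (φ : H →* H) := hB ▸ Subgroup.mem_top _
    obtain ⟨k, hk, he⟩ := this
    exact (φ.injective he) ▸ hk
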